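/- Let C ≥ 2 be an integer, λ > 0 a real number, and ε a real number with 0 < ε ≤ (1/2) * ((C − 1)/((1 + λ) * C))^2. Let X be a type, A and B subsets of X, y : X → Fin C, and f : X → (Fin C → ℝ) a function such that f x is a positive probability vector on Fin C for every x ∈ A ∪ B. Suppose KL((e_{y x})_λ ‖ f x) < ε for every x ∈ A, and KL(U ‖ f x) < ε for every x ∈ B. Then for every a ∈ A and b ∈ B, MSP(f a) > MSP(f b). -/

import Mathlib

/-- `p` is a positive probability vector on `Fin C`. -/
def IsPosProbVec {C : ℕ} (p : Fin C → ℝ) : Prop :=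
  (∀ i, 0 < p i) ∧ ∑ i, p i = 1

/-- The uniform probability vector on `Fin C`. -/
noncomputable def unif (C : ℕ) : Fin C → ℝ := fun _ => 1 / (C : ℝ)

/-- The smoothed vector `p_λ`, `p_λ i = (p i + λ/C)/(1 + λ)`. -/
noncomputable def smooth {C : ℕ} (lam : ℝ) (p : Fin C → ℝ) : Fin C → ℝ :=
  fun i => (p i + lam / (C : ℝ)) / (1 + lam)

/-- Maximum softmax probability: the maximum of `p` over `Fin C`. -/
noncomputable def MSP {C : ℕ} (p : Fin C → ℝ) : ℝ := ⨆ i, p i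

/-- KL divergence `KL(a ‖ b) = ∑ i, a i * log (a i / b i)`; terms with
`a i = 0` contribute `0` (which holds since `0 * log (0 / b i) = 0`). -/
noncomputable def KLdiv {C : ℕ} (a b : Fin C → ℝ) : ℝ :=
  ∑ i, a i * Real.log (a i / b i)

/-- The one-hot probability vector at `y`. -/
def oneHot {C : ℕ} (y : Fin C) : Fin C → ℝ := fun i => if i = y then 1 else 0

open Finset

/-- Binary Pinsker inequality. -/
lemma binaryPinsker {x t : ℝ} (hx0 : 0 < x) (hx1 : x < 1) (ht0 : 0 < t) (ht1 : t < 1) :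
    2 * (x - t) ^ 2 ≤ x * Real.log (x / t) + (1 - x) * Real.log ((1 - x) / (1 - t)) := by
  set g : ℝ → ℝ := fun s =>
    x * Real.log x - x * Real.log s +
      ((1 - x) * Real.log (1 - x) - (1 - x) * Real.log (1 - s)) - 2 * (x - s) ^ 2 with hg
  have hderiv : ∀ s ∈ Set.Ioo (0:ℝ) 1,
      HasDerivAt g ((s - x) * (1 / (s * (1 - s)) - 4)) s := by
    intro s hs
    have hs0 : s ≠ 0 := ne_of_gt hs.1
    have hs1 : (1:ℝ) - s ≠ 0 := by linarith [hs.2]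
    have h1 : HasDerivAt (fun s => x * Real.log s) (x * s⁻¹) s :=
      (Real.hasDerivAt_log hs0).const_mul x
    have h2' : HasDerivAt (fun s : ℝ => 1 - s) (-1) s := by
      simpa using (hasDerivAt_id s).const_sub 1
    have h2 : HasDerivAt (fun s => (1 - x) * Real.log (1 - s))
        ((1 - x) * ((1 - s)⁻¹ * (-1))) s :=
      (((Real.hasDerivAt_log hs1).comp s h2')).const_mul (1 - x)
    have h3' : HasDerivAt (fun s : ℝ => x - s) (-1) s := by
      simpa using (hasDerivAt_id s).const_sub x
    have h3 : HasDerivAt (fun s : ℝ => 2 * (x - s) ^ 2)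
        (2 * (2 * (x - s) ^ 1 * (-1))) s := (h3'.pow 2).const_mul 2
    have := (((hasDerivAt_const s (x * Real.log x)).sub h1).add
      ((hasDerivAt_const s ((1 - x) * Real.log (1 - x))).sub h2)).sub h3
    refine this.congr_deriv ?_
    field_simp
    ring
  have hgx : g x = 0 := by simp [hg]
  have key : 0 ≤ g t := by
    rcases le_or_gt t x with h | h
    · have hmono : AntitoneOn g (Set.Icc t x) := by
        apply antitoneOn_of_deriv_nonpos (convex_Icc t x)
        · intro s hs
          exact ((hderiv s ⟨lt_of_lt_of_le ht0 hs.1,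
            lt_of_le_of_lt hs.2 hx1⟩).continuousAt).continuousWithinAt
        · intro s hs
          rw [interior_Icc] at hs
          exact (hderiv s ⟨lt_trans ht0 hs.1,
            lt_trans hs.2 hx1⟩).differentiableAt.differentiableWithinAt
        · intro s hs
          rw [interior_Icc] at hs
          have hs' : s ∈ Set.Ioo (0:ℝ) 1 := ⟨lt_trans ht0 hs.1, lt_trans hs.2 hx1⟩
          rw [(hderiv s hs').deriv]
          have hpos : 0 < s * (1 - s) := mul_pos hs'.1 (by linarith [hs'.2])
          have : (0:ℝ) ≤ 1 / (s * (1 - s)) - 4 := by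
            rw [sub_nonneg, le_div_iff₀ hpos]; nlinarith [sq_nonneg (1 - 2*s)]
          exact mul_nonpos_of_nonpos_of_nonneg (by linarith [hs.2]) this
      have := hmono (Set.left_mem_Icc.2 h) (Set.right_mem_Icc.2 h) h
      rw [hgx] at this; exact this
    · have hmono : MonotoneOn g (Set.Icc x t) := by
        apply monotoneOn_of_deriv_nonneg (convex_Icc x t)
        · intro s hs
          exact ((hderiv s ⟨lt_of_lt_of_le hx0 hs.1,
            lt_of_le_of_lt hs.2 ht1⟩).continuousAt).continuousWithinAt
        · intro s hs
          rw [interior_Icc] at hs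
          exact (hderiv s ⟨lt_trans hx0 hs.1,
            lt_trans hs.2 ht1⟩).differentiableAt.differentiableWithinAt
        · intro s hs
          rw [interior_Icc] at hs
          have hs' : s ∈ Set.Ioo (0:ℝ) 1 := ⟨lt_trans hx0 hs.1, lt_trans hs.2 ht1⟩
          rw [(hderiv s hs').deriv]
          have hpos : 0 < s * (1 - s) := mul_pos hs'.1 (by linarith [hs'.2])
          have : (0:ℝ) ≤ 1 / (s * (1 - s)) - 4 := by
            rw [sub_nonneg, le_div_iff₀ hpos]; nlinarith [sq_nonneg (1 - 2*s)]
          exact mul_nonneg (by linarith [hs.1]) this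
      have := hmono (Set.left_mem_Icc.2 h.le) (Set.right_mem_Icc.2 h.le) h.le
      rw [hgx] at this; exact this
  have e1 : Real.log (x / t) = Real.log x - Real.log t :=
    Real.log_div (ne_of_gt hx0) (ne_of_gt ht0)
  have e2 : Real.log ((1 - x) / (1 - t)) = Real.log (1 - x) - Real.log (1 - t) :=
    Real.log_div (by linarith) (by linarith)
  rw [e1, e2]
  have : g t = x * (Real.log x - Real.log t) + (1 - x) * (Real.log (1 - x) - Real.log (1 - t))
      - 2 * (x - t) ^ 2 := by simp [hg]; ring
  linarith [key, this.symm.le, this.le]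

/-- Per-coordinate KL lower bound for a target vector that is constant off `j`. -/
lemma coord_bound {C : ℕ} (hC : 2 ≤ C) {m : ℝ} (hm0 : 0 < m) (hm1 : m < 1) (j : Fin C)
    (p q : Fin C → ℝ) (hp : ∀ i, p i = if i = j then m else (1 - m) / ((C : ℝ) - 1))
    (hq0 : ∀ i, 0 < q i) (hq1 : ∑ i, q i = 1) :
    2 * (m - q j) ^ 2 ≤ KLdiv p q := by
  have hC1 : (0:ℝ) < (C : ℝ) - 1 := by
    have : (2:ℝ) ≤ (C:ℝ) := by exact_mod_cast hC
    linarith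
  set c : ℝ := (1 - m) / ((C : ℝ) - 1) with hc
  have hc0 : 0 < c := div_pos (by linarith) hC1
  have hqj1 : q j < 1 := by
    obtain ⟨i, hij⟩ : ∃ i : Fin C, i ≠ j := by
      have : Nontrivial (Fin C) := Fin.nontrivial_iff_two_le.mpr hC
      exact exists_ne j
    have := Finset.single_lt_sum hij (mem_univ j) (mem_univ i) (hq0 i)
      (fun k _ _ => (hq0 k).le)
    rwa [hq1] at this
  have hcard : (univ.erase j).card = C - 1 := by
    rw [Finset.card_erase_of_mem (mem_univ j), Finset.card_univ, Fintype.card_fin]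
  have hcardR : ((univ.erase j).card : ℝ) = (C : ℝ) - 1 := by
    rw [hcard]; push_cast [Nat.cast_sub (by omega : 1 ≤ C)]; ring
  have hqsum : ∑ i ∈ univ.erase j, q i = 1 - q j := by
    have := Finset.add_sum_erase univ q (mem_univ j)
    rw [hq1] at this; linarith
  have hqj0 := hq0 j
  have hjensen : ∑ i ∈ univ.erase j, (((C:ℝ)-1)⁻¹) • Real.log (q i) ≤
      Real.log (∑ i ∈ univ.erase j, (((C:ℝ)-1)⁻¹) • q i) := by
    apply (strictConcaveOn_log_Ioi.concaveOn).le_map_sum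
    · intro i _; positivity
    · rw [Finset.sum_const, nsmul_eq_mul, hcardR]
      field_simp
    · intro i _; exact hq0 i
  have hjensen' : ∑ i ∈ univ.erase j, Real.log (q i) ≤
      ((C:ℝ) - 1) * Real.log ((1 - q j) / ((C:ℝ) - 1)) := by
    have h1 : ∑ i ∈ univ.erase j, (((C:ℝ)-1)⁻¹) • q i = (1 - q j) / ((C:ℝ) - 1) := by
      rw [← Finset.smul_sum, hqsum, smul_eq_mul]; ring
    have h2 : ∑ i ∈ univ.erase j, (((C:ℝ)-1)⁻¹) • Real.log (q i)
        = (((C:ℝ)-1)⁻¹) * ∑ i ∈ univ.erase j, Real.log (q i) := by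
      rw [← Finset.smul_sum, smul_eq_mul]
    rw [h1, h2] at hjensen
    calc ∑ i ∈ univ.erase j, Real.log (q i)
        = ((C:ℝ)-1) * ((((C:ℝ)-1)⁻¹) * ∑ i ∈ univ.erase j, Real.log (q i)) := by
          field_simp
      _ ≤ ((C:ℝ)-1) * Real.log ((1 - q j) / ((C:ℝ) - 1)) := by
          exact mul_le_mul_of_nonneg_left hjensen (le_of_lt hC1)
  have hsplit : KLdiv p q = m * Real.log (m / q j)
      + ∑ i ∈ univ.erase j, c * Real.log (c / q i) := by
    rw [KLdiv, ← Finset.add_sum_erase univ _ (mem_univ j)]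
    congr 1
    · rw [hp j]; simp
    · apply Finset.sum_congr rfl
      intro i hi
      rw [hp i, if_neg (Finset.mem_erase.mp hi).1]
  have hterm : ∀ i ∈ univ.erase j, c * Real.log (c / q i)
      = c * Real.log c - c * Real.log (q i) := by
    intro i _
    rw [Real.log_div (ne_of_gt hc0) (ne_of_gt (hq0 i))]; ring
  have h1mq : (0:ℝ) < 1 - q j := by linarith
  have herase : (1 - m) * Real.log ((1 - m) / (1 - q j))
      ≤ ∑ i ∈ univ.erase j, c * Real.log (c / q i) := by
    rw [Finset.sum_congr rfl hterm, Finset.sum_sub_distrib, Finset.sum_const, nsmul_eq_mul,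
      hcardR, ← Finset.mul_sum]
    have hcC : ((C:ℝ) - 1) * c = 1 - m := by
      rw [hc]; field_simp
    have hb : c * ∑ i ∈ univ.erase j, Real.log (q i)
        ≤ c * (((C:ℝ) - 1) * Real.log ((1 - q j) / ((C:ℝ) - 1))) :=
      mul_le_mul_of_nonneg_left hjensen' (le_of_lt hc0)
    have heq : (1 - m) * Real.log ((1 - m) / (1 - q j))
        = ((C:ℝ) - 1) * (c * Real.log c)
          - c * (((C:ℝ) - 1) * Real.log ((1 - q j) / ((C:ℝ) - 1))) := by
      have hlog1 : Real.log ((1 - m) / (1 - q j)) = Real.log (1 - m) - Real.log (1 - q j) :=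
        Real.log_div (by linarith) (ne_of_gt h1mq)
      have hlog2 : Real.log c = Real.log (1 - m) - Real.log ((C:ℝ) - 1) := by
        rw [hc, Real.log_div (by linarith) (ne_of_gt hC1)]
      have hlog3 : Real.log ((1 - q j) / ((C:ℝ) - 1))
          = Real.log (1 - q j) - Real.log ((C:ℝ) - 1) :=
        Real.log_div (ne_of_gt h1mq) (ne_of_gt hC1)
      rw [hlog1, hlog2, hlog3, hc]
      field_simp
      ring
    rw [heq]
    linarith [hb]
  have hbp := binaryPinsker hm0 hm1 hqj0 hqj1
  linarith [hsplit.ge, hsplit.le, herase, hbp]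

/-- If on `A` the predictions are KL-close to smoothed one-hot targets and on
`B` they are KL-close to uniform, with `ε` below the critical threshold, then
every point of `A` receives strictly larger maximum softmax probability than
every point of `B`. -/
theorem MSP_separation_of_small_KL
    (C : ℕ) (hC : 2 ≤ C) (lam : ℝ) (hlam : 0 < lam) (ε : ℝ)
    (hε : 0 < ε) (hε' : ε ≤ (1 / 2) * (((C : ℝ) - 1) / ((1 + lam) * (C : ℝ))) ^ 2)
    {X : Type*} (A B : Set X) (y : X → Fin C) (f : X → (Fin C → ℝ))
    (hf : ∀ x ∈ A ∪ B, IsPosProbVec (f x))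
    (hA : ∀ x ∈ A, KLdiv (smooth lam (oneHot (y x))) (f x) < ε)
    (hB : ∀ x ∈ B, KLdiv (unif C) (f x) < ε) :
    ∀ a ∈ A, ∀ b ∈ B, MSP (f a) > MSP (f b) := by
  have hCR : (2:ℝ) ≤ (C:ℝ) := by exact_mod_cast hC
  have hCpos : (0:ℝ) < (C:ℝ) := by linarith
  have hlam1 : (0:ℝ) < 1 + lam := by linarith
  set Δ : ℝ := ((C:ℝ) - 1) / ((1 + lam) * (C:ℝ)) with hΔdef
  have hΔpos : 0 < Δ := div_pos (by linarith) (by positivity)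
  haveI : Nonempty (Fin C) := Fin.pos_iff_nonempty.mp (by omega)
  have hCne : (C:ℝ) ≠ 0 := ne_of_gt hCpos
  have hC1ne : (C:ℝ) - 1 ≠ 0 := by linarith
  have hlamne : (1:ℝ) + lam ≠ 0 := ne_of_gt hlam1
  intro a ha b hb
  obtain ⟨hfa0, hfa1⟩ := hf a (Or.inl ha)
  obtain ⟨hfb0, hfb1⟩ := hf b (Or.inr hb)
  -- upper bound for every coordinate of f b
  have hBbound : ∀ i : Fin C, f b i < 1 / (C:ℝ) + Δ / 2 := by
    intro i
    have hm0 : (0:ℝ) < 1 / (C:ℝ) := by positivity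
    have hm1 : (1:ℝ) / (C:ℝ) < 1 := by
      rw [div_lt_one hCpos]; linarith
    have hp : ∀ k : Fin C, unif C k =
        if k = i then 1 / (C:ℝ) else (1 - 1 / (C:ℝ)) / ((C:ℝ) - 1) := by
      intro k
      rcases eq_or_ne k i with h | h
      · simp [unif, h]
      · rw [if_neg h, unif]
        field_simp
    have hkl := coord_bound hC hm0 hm1 i (unif C) (f b) hp hfb0 hfb1
    have hlt : 2 * (1 / (C:ℝ) - f b i) ^ 2 < (1/2) * Δ ^ 2 :=
      lt_of_le_of_lt hkl (lt_of_lt_of_le (hB b hb) hε')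
    nlinarith [sq_nonneg (f b i - 1 / (C:ℝ) - Δ / 2), hΔpos]
  -- lower bound for the hot coordinate of f a
  have hAbound : 1 / (C:ℝ) + Δ / 2 < f a (y a) := by
    set m : ℝ := (1 + lam / (C:ℝ)) / (1 + lam) with hmdef
    have hm0 : 0 < m := by positivity
    have hm1 : m < 1 := by
      rw [hmdef, div_lt_one hlam1]
      have : lam / (C:ℝ) < lam := by
        rw [div_lt_iff₀ hCpos]; nlinarith
      linarith
    have hp : ∀ k : Fin C, smooth lam (oneHot (y a)) k =
        if k = y a then m else (1 - m) / ((C:ℝ) - 1) := by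
      intro k
      rcases eq_or_ne k (y a) with h | h
      · simp [smooth, oneHot, h, hmdef]
      · rw [if_neg h]
        simp only [smooth, oneHot, if_neg h]
        rw [hmdef]
        field_simp
        ring
    have hkl := coord_bound hC hm0 hm1 (y a) _ (f a) hp hfa0 hfa1
    have hlt : 2 * (m - f a (y a)) ^ 2 < (1/2) * Δ ^ 2 :=
      lt_of_le_of_lt hkl (lt_of_lt_of_le (hA a ha) hε')
    have hmΔ : m = 1 / (C:ℝ) + Δ := by
      rw [hmdef, hΔdef]
      field_simp
      ring
    nlinarith [sq_nonneg (m - f a (y a) + Δ / 2), hΔpos]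
  -- conclude about suprema
  have hub : MSP (f b) < 1 / (C:ℝ) + Δ / 2 := by
    obtain ⟨i0, hi0⟩ := Finite.exists_max (f b)
    have h1 : MSP (f b) ≤ f b i0 := ciSup_le hi0
    exact lt_of_le_of_lt h1 (hBbound i0)
  have hlb : 1 / (C:ℝ) + Δ / 2 < MSP (f a) := by
    have h1 : f a (y a) ≤ MSP (f a) :=
      le_ciSup (Set.Finite.bddAbove (Set.finite_range (f a))) (y a)
    exact lt_of_lt_of_le hAbound h1
  exact lt_trans hub hlb
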